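/- For all complex numbers $b$, $\left|\frac{\sinh b}{b}\right|^2 \le \left(\frac{\sinh(\mathrm{Re}\,b)}{\mathrm{Re}\,b}\right)^2$, with the conventions that $\sinh(z)/z = 1$ at $z=0$; moreover equality holds only if $b$ is real. -/

import Mathlib

lemma key_abs_sinh (b : ℂ) :
    ‖Complex.sinh b‖ ^ 2 = Real.sinh b.re ^ 2 + Real.sin b.im ^ 2 := by
  have h : Complex.sinh b = Complex.sinh (b.re + b.im * Complex.I) := by
    rw [Complex.re_add_im]
  rw [h, Complex.sinh_add, Complex.sinh_mul_I, Complex.cosh_mul_I,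
    Complex.sq_norm, Complex.normSq_apply]
  simp [Complex.sinh_ofReal_re, Complex.sinh_ofReal_im, Complex.cosh_ofReal_re,
    Complex.cosh_ofReal_im, Complex.sin_ofReal_re, Complex.sin_ofReal_im,
    Complex.cos_ofReal_re, Complex.cos_ofReal_im]
  nlinarith [Real.sin_sq_add_cos_sq b.im, Real.cosh_sq b.re]

lemma sq_lt_sinh_sq {x : ℝ} (hx : x ≠ 0) : x ^ 2 < Real.sinh x ^ 2 := by
  rcases lt_or_gt_of_ne hx with h | h
  · have h1 : Real.sinh x < x := Real.sinh_lt_self_iff.2 h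
    nlinarith
  · have h1 : x < Real.sinh x := Real.self_lt_sinh_iff.2 h
    nlinarith

/-- `|sinh b / b|² ≤ (sinh(Re b)/(Re b))²` with the convention
`sinh z / z = 1` at `z = 0`, and equality holds only if `b` is real. -/
theorem stmt1 (b : ℂ) :
    ‖(if b = 0 then (1 : ℂ) else Complex.sinh b / b)‖ ^ 2 ≤
      (if b.re = 0 then 1 else Real.sinh b.re / b.re) ^ 2 ∧
    (‖(if b = 0 then (1 : ℂ) else Complex.sinh b / b)‖ ^ 2 =
      (if b.re = 0 then 1 else Real.sinh b.re / b.re) ^ 2 → b.im = 0) := by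
  by_cases hb : b = 0
  · subst hb; simp
  · rw [if_neg hb]
    have hD : (0:ℝ) < b.re ^ 2 + b.im ^ 2 := by
      have h := Complex.normSq_pos.2 hb
      rw [Complex.normSq_apply, ← sq, ← sq] at h
      exact h
    have hL : ‖Complex.sinh b / b‖ ^ 2 =
        (Real.sinh b.re ^ 2 + Real.sin b.im ^ 2) / (b.re ^ 2 + b.im ^ 2) := by
      rw [norm_div, div_pow, key_abs_sinh, Complex.sq_norm, Complex.normSq_apply, ← sq, ← sq]
    by_cases hre : b.re = 0
    · rw [if_pos hre]
      have hy : b.im ≠ 0 := fun h => hb (Complex.ext hre h)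
      have hsin : Real.sin b.im ^ 2 < b.im ^ 2 := Real.sin_sq_lt_sq hy
      have hy2 : (0:ℝ) < b.im ^ 2 := by positivity
      have hlt : ‖Complex.sinh b / b‖ ^ 2 < 1 ^ 2 := by
        rw [hL, hre, one_pow, div_lt_one (by simpa [hre] using hD)]
        simp only [Real.sinh_zero]
        nlinarith
      exact ⟨hlt.le, fun h => absurd h hlt.ne⟩
    · rw [if_neg hre]
      have hX : (0:ℝ) < b.re ^ 2 := by positivity
      have hsq : b.re ^ 2 < Real.sinh b.re ^ 2 := sq_lt_sinh_sq hre
      have hsin : Real.sin b.im ^ 2 ≤ b.im ^ 2 := Real.sin_sq_le_sq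
      have hRHS : (Real.sinh b.re / b.re) ^ 2 = Real.sinh b.re ^ 2 / b.re ^ 2 := div_pow _ _ 2
      constructor
      · rw [hL, hRHS, div_le_div_iff₀ hD hX]
        nlinarith [sq_nonneg b.im, sq_nonneg b.re]
      · intro h
        by_contra hy
        have hy2 : (0:ℝ) < b.im ^ 2 := by positivity
        have hlt : ‖Complex.sinh b / b‖ ^ 2 < (Real.sinh b.re / b.re) ^ 2 := by
          rw [hL, hRHS, div_lt_div_iff₀ hD hX]
          nlinarith
        exact absurd h hlt.ne
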